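/- Let S be an RN module over ℝ with base (Ω, F, P) and let x, y ∈ S be such that P(A_{xy}) > 0 and x and y are not L⁰-independent on A_{xy}. Then there exist F ∈ F̃ with F ⊂ A_{xy} and P(F) > 0 and ξ, η ∈ L⁰(F,ℝ) with F ⊂ [ξ ≠ 0] ∩ [η ≠ 0] such that ξI_F x + ηI_F y = θ and such that, whenever P(A_{xy}\F) > 0, x and y are L⁰-independent on A_{xy}\F; moreover F is the unique element of F̃ with these properties. -/

import Mathlib

open MeasureTheory Filter Set

noncomputable section

namespace RNM

variable {Ω : Type*} [MeasurableSpace Ω]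

/-- `L⁰(F, ℝ)`: equivalence classes of real random variables mod a.e. equality. -/
abbrev L0 (μ : Measure Ω) : Type _ := Ω →ₘ[μ] ℝ

open Classical in
/-- The equivalence class of the indicator function of a (measurable) set. -/
noncomputable def ind (μ : Measure Ω) (A : Set Ω) : L0 μ :=
  if h : MeasurableSet A then
    AEEqFun.mk (A.indicator fun _ => (1 : ℝ)) (aestronglyMeasurable_const.indicator h)
  else 0

/-- The constant function, as an element of `L⁰`. -/
noncomputable def cst (μ : Measure Ω) (r : ℝ) : L0 μ := AEEqFun.const Ω r

/-- `A ⊂ B` modulo null sets. -/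
def aeSub (μ : Measure Ω) (A B : Set Ω) : Prop := μ (A \ B) = 0

/-- `A = B` modulo null sets. -/
def aeEqS (μ : Measure Ω) (A B : Set Ω) : Prop := μ ((A \ B) ∪ (B \ A)) = 0

variable {μ : Measure Ω} {S : Type*} [AddCommGroup S]

/-- The axioms of a random normed module over ℝ with base `(Ω, F, μ)`: `S` is a left module
over the algebra `L⁰(F,ℝ)` (with module multiplication `sm`) and `nrm` is an `L⁰`-norm. -/
structure IsRNModule (μ : Measure Ω) (sm : L0 μ → S → S) (nrm : S → L0 μ) : Prop where
  smul_add : ∀ ξ x y, sm ξ (x + y) = sm ξ x + sm ξ y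
  add_smul : ∀ ξ η x, sm (ξ + η) x = sm ξ x + sm η x
  mul_smul : ∀ ξ η x, sm (ξ * η) x = sm ξ (sm η x)
  one_smul : ∀ x, sm 1 x = x
  nrm_nonneg : ∀ x, 0 ≤ nrm x
  nrm_smul : ∀ ξ x, nrm (sm ξ x) = |ξ| * nrm x
  nrm_add : ∀ x y, nrm (x + y) ≤ nrm x + nrm y
  nrm_eq_zero : ∀ x, nrm x = 0 → x = 0

/-- `x` and `y` are `L⁰`-independent on `F`. -/
def Indep (sm : L0 μ → S → S) (x y : S) (F : Set Ω) : Prop :=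
  ∀ ξ η : L0 μ, sm (ξ * ind μ F) x + sm (η * ind μ F) y = 0 →
    ξ * ind μ F = 0 ∧ η * ind μ F = 0

/-- `Rank_D(S) ≥ 2`. -/
def RankGe2 (sm : L0 μ → S → S) (D : Set Ω) : Prop := ∃ x y : S, Indep sm x y D

/-- `A_x = [‖x‖ > 0]`. -/
def Aset (nrm : S → L0 μ) (x : S) : Set Ω := {ω | 0 < (nrm x) ω}

/-- `A_{xy} = A_x ∩ A_y`. -/
def Axy (nrm : S → L0 μ) (x y : S) : Set Ω := Aset nrm x ∩ Aset nrm y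

/-- `B_{xy} = A_{xy} ∩ A_{x-y}`. -/
def Bxy (nrm : S → L0 μ) (x y : S) : Set Ω := Axy nrm x y ∩ Aset nrm (x - y)

/-- `H` is (a representative of) the support `H(S) = [⋁{‖x‖ : x ∈ S} > 0]`. -/
def IsSupport (nrm : S → L0 μ) (H : Set Ω) : Prop :=
  MeasurableSet H ∧ (∀ x : S, aeSub μ (Aset nrm x) H) ∧
    ∀ B : Set Ω, MeasurableSet B → aeSub μ B H → 0 < μ B →
      ∃ x : S, 0 < μ (B ∩ Aset nrm x)

/-- A sequence in `S` is Cauchy for the topology of convergence in probability. -/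
def CauchyInProb (μ : Measure Ω) (nrm : S → L0 μ) (u : ℕ → S) : Prop :=
  ∀ ε : ℝ, 0 < ε →
    Tendsto (fun p : ℕ × ℕ => μ {ω | ε ≤ |(nrm (u p.1 - u p.2)) ω|}) atTop (nhds 0)

/-- `u n → x` in probability (i.e. `‖u n - x‖ → 0` in probability). -/
def TendstoInProb (μ : Measure Ω) (nrm : S → L0 μ) (u : ℕ → S) (x : S) : Prop :=
  ∀ ε : ℝ, 0 < ε →
    Tendsto (fun n => μ {ω | ε ≤ |(nrm (u n - x)) ω|}) atTop (nhds 0)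

/-- Completeness of a random normed module. -/
def CompleteRN (μ : Measure Ω) (nrm : S → L0 μ) : Prop :=
  ∀ u : ℕ → S, CauchyInProb μ nrm u → ∃ x : S, TendstoInProb μ nrm u x

/-- The random unit sphere `S(1)`. -/
def sphere (nrm : S → L0 μ) : Set S :=
  {x | ∃ A : Set Ω, MeasurableSet A ∧ 0 < μ A ∧ nrm x = ind μ A}

/-- The random closed unit ball `U(1)`. -/
def ball (nrm : S → L0 μ) : Set S := {x | nrm x ≤ 1}

/-- `ε` is an admissible random convexity parameter on `D`: `ε ≥ 0` and `0 < ε ≤ 2` on `D`. -/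
def Admissible (μ : Measure Ω) (D : Set Ω) (ε : L0 μ) : Prop :=
  0 ≤ ε ∧ ∀ᵐ ω ∂μ, ω ∈ D → 0 < ε ω ∧ ε ω ≤ 2

/-- midpoint `(x+y)/2`. -/
def mid (μ : Measure Ω) (sm : L0 μ → S → S) (x y : S) : S := sm (cst μ (1/2)) (x + y)

/-- The set whose infimum (in the a.s. order of `L⁰`) is the modulus of random
convexity `δ_D(ε)`. -/
def modSet (μ : Measure Ω) (sm : L0 μ → S → S) (nrm : S → L0 μ) (D : Set Ω) (ε : L0 μ) :
    Set (L0 μ) :=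
  {z | ∃ x ∈ sphere nrm, ∃ y ∈ sphere nrm, aeSub μ D (Bxy nrm x y) ∧
    ε * ind μ D ≤ ind μ D * nrm (x - y) ∧
    z = ind μ D - ind μ D * nrm (mid μ sm x y)}

/-- `S` is random uniformly convex: `δ_{H(S)}(ε) > 0` on `H(S)` for every admissible `ε`. -/
def RandomUniformlyConvex (μ : Measure Ω) (sm : L0 μ → S → S) (nrm : S → L0 μ)
    (H : Set Ω) : Prop :=
  ∀ ε : L0 μ, Admissible μ H ε → ∀ d : L0 μ, IsGLB (modSet μ sm nrm H ε) d →
    ∀ᵐ ω ∂μ, ω ∈ H → 0 < d ω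

/-- `G` is (a representative of) `G(S)`. -/
def IsGSet (μ : Measure Ω) (sm : L0 μ → S → S) (H G : Set Ω) : Prop :=
  MeasurableSet G ∧ aeSub μ G H ∧ 0 < μ G ∧ RankGe2 sm G ∧
    ∀ D : Set Ω, MeasurableSet D → aeSub μ D (H \ G) → 0 < μ D → ¬ RankGe2 sm D


/-- The properties demanded of `F` in Proposition 2.1(1): `F ⊂ A_{xy}`, `P(F) > 0`, there
are `ξ, η` nonzero on `F` with `ξ I_F x + η I_F y = θ`, and `x, y` are `L⁰`-independent
on `A_{xy} \ F` whenever it has positive probability. -/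
def SplitProp (μ : Measure Ω) (sm : L0 μ → S → S) (nrm : S → L0 μ) (x y : S)
    (F : Set Ω) : Prop :=
  MeasurableSet F ∧ aeSub μ F (Axy nrm x y) ∧ 0 < μ F ∧
    (∃ ξ η : L0 μ, aeSub μ F {ω | ξ ω ≠ 0} ∧ aeSub μ F {ω | η ω ≠ 0} ∧
      sm (ξ * ind μ F) x + sm (η * ind μ F) y = 0) ∧
    (0 < μ (Axy nrm x y \ F) → Indep sm x y (Axy nrm x y \ F))


/-! ### Auxiliary material for the proof -/

section Aux

variable {Ω : Type*} [MeasurableSpace Ω] {μ : Measure Ω} {S : Type*} [AddCommGroup S]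
variable {sm : L0 μ → S → S} {nrm : S → L0 μ}

lemma ind_coeFn {A : Set Ω} (hA : MeasurableSet A) :
    ⇑(ind μ A) =ᵐ[μ] A.indicator (fun _ => (1:ℝ)) := by
  rw [ind, dif_pos hA]; exact AEEqFun.coeFn_mk _ _

lemma ind_mul_ind {A B : Set Ω} (hA : MeasurableSet A) (hB : MeasurableSet B) :
    ind μ A * ind μ B = ind μ (A ∩ B) := by
  refine AEEqFun.ext ?_
  filter_upwards [AEEqFun.coeFn_mul (ind μ A) (ind μ B), ind_coeFn hA, ind_coeFn hB,
    ind_coeFn (hA.inter hB)] with ω h1 h2 h3 h4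
  rw [h1, Pi.mul_apply, h2, h3, h4]
  by_cases hω : ω ∈ A <;> by_cases hω' : ω ∈ B <;>
    simp [Set.indicator, hω, hω']

lemma ind_congr {A B : Set Ω} (h : ∀ᵐ ω ∂μ, ω ∈ A ↔ ω ∈ B)
    (hA : MeasurableSet A) (hB : MeasurableSet B) : ind μ A = ind μ B := by
  refine AEEqFun.ext ?_
  filter_upwards [ind_coeFn hA, ind_coeFn hB, h] with ω h1 h2 h3
  rw [h1, h2]
  by_cases hω : ω ∈ A
  · simp [Set.indicator, hω, h3.1 hω]
  · have : ω ∉ B := fun hb => hω (h3.2 hb)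
    simp [Set.indicator, hω, this]

lemma aeSub_iff {A B : Set Ω} : aeSub μ A B ↔ ∀ᵐ ω ∂μ, ω ∈ A → ω ∈ B := by
  rw [aeSub, measure_eq_zero_iff_ae_notMem]
  simp only [Set.mem_diff, not_and, not_not]

lemma measurable_ne_zero (ξ : L0 μ) : MeasurableSet {ω | ξ ω ≠ 0} := by
  have : {ω | ξ ω ≠ 0} = ⇑ξ ⁻¹' ({0}ᶜ) := rfl
  rw [this]
  exact ξ.measurable (measurableSet_singleton 0).compl

lemma measurable_Aset (x : S) : MeasurableSet (Aset nrm x) :=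
  measurableSet_lt measurable_const (nrm x).measurable

lemma sm_zero_left (hRN : IsRNModule μ sm nrm) (x : S) : sm 0 x = 0 := by
  have h := hRN.add_smul 0 0 x
  rw [add_zero] at h
  exact left_eq_add.mp h

lemma sm_zero_right (hRN : IsRNModule μ sm nrm) (ξ : L0 μ) : sm ξ 0 = 0 := by
  have h := hRN.smul_add ξ 0 0
  rw [add_zero] at h
  exact left_eq_add.mp h

lemma sm_neg (hRN : IsRNModule μ sm nrm) (ξ : L0 μ) (x : S) : sm (-ξ) x = -(sm ξ x) := by
  have h := hRN.add_smul ξ (-ξ) x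
  rw [add_neg_cancel, sm_zero_left hRN] at h
  exact (neg_eq_of_add_eq_zero_right h.symm).symm

lemma nrm_zero (hRN : IsRNModule μ sm nrm) : nrm (0:S) = 0 := by
  have h : nrm (0:S) = |(0:L0 μ)| * nrm (0:S) := by
    conv_lhs => rw [← sm_zero_left hRN (0:S)]
    exact hRN.nrm_smul 0 0
  refine AEEqFun.ext ?_
  have hc : ⇑(nrm (0:S)) =ᵐ[μ] ⇑(|(0:L0 μ)| * nrm (0:S)) := by rw [← h]
  filter_upwards [hc, AEEqFun.coeFn_mul |(0:L0 μ)| (nrm (0:S)), AEEqFun.coeFn_abs (0:L0 μ),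
    (AEEqFun.coeFn_zero : ⇑(0 : Ω →ₘ[μ] ℝ) =ᵐ[μ] 0)] with ω e1 e2 e3 e4
  rw [e1, e2, Pi.mul_apply, e3, e4]
  simp

lemma nrm_nonneg_ae (hRN : IsRNModule μ sm nrm) (x : S) : ∀ᵐ ω ∂μ, 0 ≤ (nrm x) ω := by
  filter_upwards [AEEqFun.coeFn_le.mpr (hRN.nrm_nonneg x),
    (AEEqFun.coeFn_zero : ⇑(0 : Ω →ₘ[μ] ℝ) =ᵐ[μ] 0)] with ω h1 h2
  calc (0:ℝ) = (0 : Ω →ₘ[μ] ℝ) ω := h2.symm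
  _ ≤ (nrm x) ω := h1

lemma rel_norm_ae (hRN : IsRNModule μ sm nrm) {a b : L0 μ} {x y : S}
    (h : sm a x + sm b y = 0) :
    ∀ᵐ ω ∂μ, |a ω| * (nrm x) ω = |b ω| * (nrm y) ω := by
  have h1 : sm a x = sm (-b) y := by
    rw [sm_neg hRN]
    exact eq_neg_of_add_eq_zero_left h
  have h2 : |a| * nrm x = |(-b)| * nrm y := by
    rw [← hRN.nrm_smul, ← hRN.nrm_smul, h1]
  have h3 : ⇑(|a| * nrm x) =ᵐ[μ] ⇑(|(-b)| * nrm y) := by rw [h2]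
  filter_upwards [h3, AEEqFun.coeFn_mul |a| (nrm x), AEEqFun.coeFn_mul |(-b)| (nrm y),
    AEEqFun.coeFn_abs a, AEEqFun.coeFn_abs (-b), AEEqFun.coeFn_neg b]
    with ω e1 e2 e3 e4 e5 e6
  have : |a ω| * (nrm x) ω = |(-b) ω| * (nrm y) ω := by
    rw [← e4, ← e5, ← Pi.mul_apply, ← Pi.mul_apply ⇑|(-b)|, ← e2, ← e3]
    exact e1
  rw [this, e6, Pi.neg_apply, abs_neg]

/-- A single dependence relation with coefficients nonzero a.e. on `F`. -/
def GoodRel (μ : Measure Ω) (sm : L0 μ → S → S) (x y : S) (F : Set Ω) (ξ η : L0 μ) : Prop :=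
  (∀ᵐ ω ∂μ, ω ∈ F → ξ ω ≠ 0) ∧ (∀ᵐ ω ∂μ, ω ∈ F → η ω ≠ 0) ∧
    sm (ξ * ind μ F) x + sm (η * ind μ F) y = 0

/-- The family of "dependence sets". -/
def Good (μ : Measure Ω) (sm : L0 μ → S → S) (nrm : S → L0 μ) (x y : S) (F : Set Ω) : Prop :=
  MeasurableSet F ∧ aeSub μ F (Axy nrm x y) ∧ ∃ ξ η : L0 μ, GoodRel μ sm x y F ξ η

lemma sm_ind_restrict {D G : Set Ω} (hD : MeasurableSet D) (hG : MeasurableSet G)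
    (hsub : G ⊆ D) (ξ : L0 μ) : ind μ G * (ξ * ind μ D) = ξ * ind μ G := by
  rw [mul_comm (ind μ G), mul_assoc, ind_mul_ind hD hG,
    Set.inter_eq_self_of_subset_right hsub]

lemma good_restrict (hRN : IsRNModule μ sm nrm) {x y : S} {D : Set Ω} (hD : MeasurableSet D)
    (hDA : aeSub μ D (Axy nrm x y)) {ξ η : L0 μ}
    (hrel : sm (ξ * ind μ D) x + sm (η * ind μ D) y = 0) :
    Good μ sm nrm x y (D ∩ {ω | ξ ω ≠ 0}) := by
  set G := D ∩ {ω | ξ ω ≠ 0} with hGdef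
  have hGm : MeasurableSet G := hD.inter (measurable_ne_zero ξ)
  have hGsub : G ⊆ D := Set.inter_subset_left
  have hrelG : sm (ξ * ind μ G) x + sm (η * ind μ G) y = 0 := by
    have e1 : sm (ξ * ind μ G) x = sm (ind μ G) (sm (ξ * ind μ D) x) := by
      rw [← hRN.mul_smul, sm_ind_restrict hD hGm hGsub]
    have e2 : sm (η * ind μ G) y = sm (ind μ G) (sm (η * ind μ D) y) := by
      rw [← hRN.mul_smul, sm_ind_restrict hD hGm hGsub]
    rw [e1, e2, ← hRN.smul_add, hrel, sm_zero_right hRN]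
  refine ⟨hGm, ?_, ξ, η, ae_of_all μ (fun ω hω => hω.2), ?_, hrelG⟩
  · rw [aeSub_iff]
    filter_upwards [aeSub_iff.mp hDA] with ω h hω
    exact h hω.1
  · filter_upwards [rel_norm_ae hRN hrel, aeSub_iff.mp hDA,
      AEEqFun.coeFn_mul ξ (ind μ D), AEEqFun.coeFn_mul η (ind μ D), ind_coeFn hD]
      with ω e h hx hh hi
    intro hωG h0
    have hωD : ω ∈ D := hωG.1
    obtain ⟨hx0, hy0⟩ : 0 < (nrm x) ω ∧ 0 < (nrm y) ω := h hωD
    rw [hx, hh, Pi.mul_apply, Pi.mul_apply, hi, Set.indicator_of_mem hωD, mul_one, mul_one,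
      h0] at e
    simp only [abs_zero, zero_mul] at e
    exact absurd e (ne_of_gt (mul_pos (abs_pos.mpr hωG.2) hx0))

lemma pos_of_ne (ξ : L0 μ) {D : Set Ω} (hD : MeasurableSet D)
    (hne : ξ * ind μ D ≠ 0) : 0 < μ (D ∩ {ω | ξ ω ≠ 0}) := by
  rcases eq_or_lt_of_le (zero_le : 0 ≤ μ (D ∩ {ω | ξ ω ≠ 0})) with h0 | h
  · exfalso
    apply hne
    refine AEEqFun.ext ?_
    filter_upwards [AEEqFun.coeFn_mul ξ (ind μ D), ind_coeFn hD,
      measure_eq_zero_iff_ae_notMem.mp h0.symm,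
      (AEEqFun.coeFn_zero : ⇑(0 : Ω →ₘ[μ] ℝ) =ᵐ[μ] 0)] with ω e1 e2 e3 e4
    rw [e1, Pi.mul_apply, e2, e4, Pi.zero_apply]
    by_cases hωD : ω ∈ D
    · have : ξ ω = 0 := by
        by_contra hξ; exact e3 ⟨hωD, hξ⟩
      simp [this]
    · simp [Set.indicator_of_notMem hωD]
  · exact h

lemma glue_spec {E : ℕ → Set Ω} (hEm : ∀ n, MeasurableSet (E n))
    (hEd : Pairwise (Function.onFun Disjoint E)) (f : ℕ → Ω → ℝ) (hf : ∀ n, Measurable (f n)) :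
    ∃ g : Ω → ℝ, Measurable g ∧ (∀ n, ∀ ω ∈ E n, g ω = f n ω) ∧
      (∀ ω, ω ∉ ⋃ n, E n → g ω = 0) := by
  classical
  have hterm : ∀ ω, ∀ m, ω ∈ E m → ∀ n, n ≠ m → (E n).indicator (f n) ω = 0 := by
    intro ω m hm n hnm
    exact Set.indicator_of_notMem (fun hn => Set.disjoint_left.mp (hEd hnm) hn hm) _
  refine ⟨fun ω => ∑' n, (E n).indicator (f n) ω, ?_, ?_, ?_⟩
  · apply measurable_of_tendsto_metrizable
      (f := fun N ω => ∑ n ∈ Finset.range N, (E n).indicator (f n) ω)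
      (fun N => Finset.measurable_sum _ fun n _ => (hf n).indicator (hEm n))
    rw [tendsto_pi_nhds]
    intro ω
    by_cases hω : ω ∈ ⋃ n, E n
    · obtain ⟨m, hm⟩ := Set.mem_iUnion.mp hω
      have hval : ∀ N ≥ m + 1, ∑ n ∈ Finset.range N, (E n).indicator (f n) ω
          = ∑' n, (E n).indicator (f n) ω := by
        intro N hN
        rw [tsum_eq_single m (fun n hn => hterm ω m hm n hn),
          Finset.sum_eq_single_of_mem m (Finset.mem_range.mpr (by omega))
            (fun n _ hn => hterm ω m hm n hn)]
      exact tendsto_atTop_of_eventually_const hval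
    · have hz : ∀ n, (E n).indicator (f n) ω = 0 := fun n =>
        Set.indicator_of_notMem (fun hmem => hω (Set.mem_iUnion.mpr ⟨n, hmem⟩)) _
      have h1 : (fun N => ∑ n ∈ Finset.range N, (E n).indicator (f n) ω) = fun _ => (0:ℝ) := by
        funext N; exact Finset.sum_eq_zero fun n _ => hz n
      have h2 : ∑' n, (E n).indicator (f n) ω = 0 := by
        rw [tsum_congr hz, tsum_zero]
      rw [h1, h2]
      exact tendsto_const_nhds
  · intro m ω hm
    show ∑' n, (E n).indicator (f n) ω = f m ω
    rw [tsum_eq_single m (fun n hn => hterm ω m hm n hn), Set.indicator_of_mem hm]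
  · intro ω hω
    have hz : ∀ n, (E n).indicator (f n) ω = 0 := fun n =>
      Set.indicator_of_notMem (fun hmem => hω (Set.mem_iUnion.mpr ⟨n, hmem⟩)) _
    show ∑' n, (E n).indicator (f n) ω = 0
    rw [tsum_congr hz, tsum_zero]

lemma good_iUnion (hRN : IsRNModule μ sm nrm) {x y : S} {F : ℕ → Set Ω}
    (hF : ∀ n, Good μ sm nrm x y (F n)) : Good μ sm nrm x y (⋃ n, F n) := by
  classical
  have hFm : ∀ n, MeasurableSet (F n) := fun n => (hF n).1
  have hUm : MeasurableSet (⋃ n, F n) := MeasurableSet.iUnion hFm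
  have hUA : aeSub μ (⋃ n, F n) (Axy nrm x y) := by
    rw [aeSub_iff]
    filter_upwards [ae_all_iff.mpr (fun n => aeSub_iff.mp (hF n).2.1)] with ω h hω
    obtain ⟨n, hn⟩ := Set.mem_iUnion.mp hω
    exact h n hn
  choose ξ η hrel using fun n => (hF n).2.2
  set E := disjointed F with hE
  have hEm : ∀ n, MeasurableSet (E n) := MeasurableSet.disjointed hFm
  have hEF : ∀ n, E n ⊆ F n := disjointed_subset F
  have hEU : ⋃ n, E n = ⋃ n, F n := iUnion_disjointed
  have hEd : Pairwise (Function.onFun Disjoint E) := disjoint_disjointed F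
  obtain ⟨g, hgm, hgval, hgoff⟩ := glue_spec hEm hEd (fun n => ⇑(ξ n)) (fun n => (ξ n).measurable)
  obtain ⟨h, hhm, hhval, hhoff⟩ := glue_spec hEm hEd (fun n => ⇑(η n)) (fun n => (η n).measurable)
  set ξ' : L0 μ := AEEqFun.mk g hgm.aestronglyMeasurable with hξ'def
  set η' : L0 μ := AEEqFun.mk h hhm.aestronglyMeasurable with hη'def
  set z : S := sm (ξ' * ind μ (⋃ n, F n)) x + sm (η' * ind μ (⋃ n, F n)) y with hzdef
  -- key: z vanishes on each E m
  have key : ∀ m, sm (ind μ (E m)) z = 0 := by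
    intro m
    have c : ∀ (ζ' : L0 μ) (w : Ω → ℝ) (hw : Measurable w) (ζ : ℕ → L0 μ),
        ζ' = AEEqFun.mk w hw.aestronglyMeasurable → (∀ ω ∈ E m, w ω = ζ m ω) →
        ind μ (E m) * (ζ' * ind μ (⋃ n, F n)) = ind μ (E m) * (ζ m * ind μ (F m)) := by
      intro ζ' w hw ζ hζ'w hwval
      refine AEEqFun.ext ?_
      filter_upwards [AEEqFun.coeFn_mul (ind μ (E m)) (ζ' * ind μ (⋃ n, F n)),
        AEEqFun.coeFn_mul ζ' (ind μ (⋃ n, F n)),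
        AEEqFun.coeFn_mul (ind μ (E m)) (ζ m * ind μ (F m)),
        AEEqFun.coeFn_mul (ζ m) (ind μ (F m)),
        ind_coeFn (hEm m), ind_coeFn hUm, ind_coeFn (hFm m),
        (show ⇑ζ' =ᵐ[μ] w by rw [hζ'w]; exact AEEqFun.coeFn_mk w hw.aestronglyMeasurable)]
        with ω e1 e2 e3 e4 e5 e6 e7 e8
      rw [e1, Pi.mul_apply, e3, Pi.mul_apply, e2, Pi.mul_apply, e4, Pi.mul_apply,
        e5, e6, e7, e8]
      by_cases hω : ω ∈ E m
      · have hωU : ω ∈ ⋃ n, F n := Set.mem_iUnion.mpr ⟨m, hEF m hω⟩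
        rw [Set.indicator_of_mem hω, Set.indicator_of_mem hωU,
          Set.indicator_of_mem (hEF m hω), hwval ω hω]
      · rw [Set.indicator_of_notMem hω]
        ring
    have c1 := c ξ' g hgm ξ hξ'def (hgval m)
    have c2 := c η' h hhm η hη'def (hhval m)
    calc sm (ind μ (E m)) z
        = sm (ind μ (E m) * (ξ' * ind μ (⋃ n, F n))) x
          + sm (ind μ (E m) * (η' * ind μ (⋃ n, F n))) y := by
          rw [hzdef, hRN.smul_add, ← hRN.mul_smul, ← hRN.mul_smul]
      _ = sm (ind μ (E m) * (ξ m * ind μ (F m))) x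
          + sm (ind μ (E m) * (η m * ind μ (F m))) y := by rw [c1, c2]
      _ = sm (ind μ (E m)) (sm (ξ m * ind μ (F m)) x + sm (η m * ind μ (F m)) y) := by
          rw [hRN.smul_add (ind μ (E m)) (sm (ξ m * ind μ (F m)) x)
            (sm (η m * ind μ (F m)) y), ← hRN.mul_smul, ← hRN.mul_smul]
      _ = 0 := by rw [(hrel m).2.2, sm_zero_right hRN]
  -- nrm z vanishes a.e. on each E m
  have hzE : ∀ m, ∀ᵐ ω ∂μ, ω ∈ E m → (nrm z) ω = 0 := by
    intro m
    have e : |ind μ (E m)| * nrm z = 0 := by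
      rw [← hRN.nrm_smul, key m, nrm_zero hRN]
    have e' : ⇑(|ind μ (E m)| * nrm z) =ᵐ[μ] ⇑(0 : L0 μ) := by rw [e]
    filter_upwards [e', AEEqFun.coeFn_mul |ind μ (E m)| (nrm z),
      AEEqFun.coeFn_abs (ind μ (E m)), ind_coeFn (hEm m),
      (AEEqFun.coeFn_zero : ⇑(0 : Ω →ₘ[μ] ℝ) =ᵐ[μ] 0)] with ω e1 e2 e3 e4 e5
    intro hω
    rw [e2, Pi.mul_apply, e3, e4, Set.indicator_of_mem hω, e5, Pi.zero_apply] at e1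
    simpa using e1
  -- nrm z vanishes a.e. off the union
  have hzoff : ∀ᵐ ω ∂μ, ω ∉ ⋃ n, F n → (nrm z) ω = 0 := by
    have hle : nrm z ≤ |ξ' * ind μ (⋃ n, F n)| * nrm x + |η' * ind μ (⋃ n, F n)| * nrm y := by
      rw [hzdef]
      have := hRN.nrm_add (sm (ξ' * ind μ (⋃ n, F n)) x) (sm (η' * ind μ (⋃ n, F n)) y)
      rwa [hRN.nrm_smul, hRN.nrm_smul] at this
    filter_upwards [AEEqFun.coeFn_le.mpr hle, nrm_nonneg_ae hRN z,
      AEEqFun.coeFn_add (|ξ' * ind μ (⋃ n, F n)| * nrm x) (|η' * ind μ (⋃ n, F n)| * nrm y),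
      AEEqFun.coeFn_mul |ξ' * ind μ (⋃ n, F n)| (nrm x),
      AEEqFun.coeFn_mul |η' * ind μ (⋃ n, F n)| (nrm y),
      AEEqFun.coeFn_abs (ξ' * ind μ (⋃ n, F n)),
      AEEqFun.coeFn_abs (η' * ind μ (⋃ n, F n)),
      AEEqFun.coeFn_mul ξ' (ind μ (⋃ n, F n)),
      AEEqFun.coeFn_mul η' (ind μ (⋃ n, F n)), ind_coeFn hUm]
      with ω e1 e2 e3 e4 e5 e6 e7 e8 e9 e10
    intro hω
    have p6 : ⇑|ξ' * ind μ (⋃ n, F n)| ω = 0 := by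
      rw [e6, e8, Pi.mul_apply, e10, Set.indicator_of_notMem hω, mul_zero, abs_zero]
    have p7 : ⇑|η' * ind μ (⋃ n, F n)| ω = 0 := by
      rw [e7, e9, Pi.mul_apply, e10, Set.indicator_of_notMem hω, mul_zero, abs_zero]
    have hval : ⇑(|ξ' * ind μ (⋃ n, F n)| * nrm x + |η' * ind μ (⋃ n, F n)| * nrm y) ω = 0 := by
      rw [e3, Pi.add_apply, e4, e5, Pi.mul_apply, Pi.mul_apply, p6, p7, zero_mul, zero_mul,
        add_zero]
    rw [hval] at e1
    exact le_antisymm e1 e2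
  have hnz : nrm z = 0 := by
    refine AEEqFun.ext ?_
    filter_upwards [ae_all_iff.mpr hzE, hzoff,
      (AEEqFun.coeFn_zero : ⇑(0 : Ω →ₘ[μ] ℝ) =ᵐ[μ] 0)] with ω h1 h2 h3
    rw [h3, Pi.zero_apply]
    by_cases hω : ω ∈ ⋃ n, F n
    · obtain ⟨m, hm⟩ := Set.mem_iUnion.mp (hEU ▸ hω)
      exact h1 m hm
    · exact h2 hω
  have hz : z = 0 := hRN.nrm_eq_zero z hnz
  refine ⟨hUm, hUA, ξ', η', ?_, ?_, hz⟩
  · filter_upwards [(AEEqFun.coeFn_mk g hgm.aestronglyMeasurable : ⇑ξ' =ᵐ[μ] g),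
      ae_all_iff.mpr (fun n => (hrel n).1)] with ω e1 e2 hω
    obtain ⟨m, hm⟩ := Set.mem_iUnion.mp (hEU ▸ hω)
    rw [e1, hgval m ω hm]
    exact e2 m (hEF m hm)
  · filter_upwards [(AEEqFun.coeFn_mk h hhm.aestronglyMeasurable : ⇑η' =ᵐ[μ] h),
      ae_all_iff.mpr (fun n => (hrel n).2.1)] with ω e1 e2 hω
    obtain ⟨m, hm⟩ := Set.mem_iUnion.mp (hEU ▸ hω)
    rw [e1, hhval m ω hm]
    exact e2 m (hEF m hm)

lemma good_symm {x y : S} {F' : Set Ω} (h : Good μ sm nrm x y F') :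
    Good μ sm nrm y x F' := by
  obtain ⟨hm, hsub, ξ, η, h1, h2, h3⟩ := h
  refine ⟨hm, ?_, η, ξ, h2, h1, by rw [add_comm]; exact h3⟩
  show μ (F' \ (Aset nrm y ∩ Aset nrm x)) = 0
  rw [Set.inter_comm]
  exact hsub

lemma exists_good_pos (hRN : IsRNModule μ sm nrm) {x y : S}
    (hnot : ¬ Indep sm x y (Axy nrm x y)) :
    ∃ G, Good μ sm nrm x y G ∧ 0 < μ G := by
  have hAm : MeasurableSet (Axy nrm x y) :=
    (measurable_Aset x).inter (measurable_Aset y)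
  have hAA : aeSub μ (Axy nrm x y) (Axy nrm x y) := by
    rw [aeSub, Set.diff_self, measure_empty]
  rw [Indep] at hnot
  push_neg at hnot
  obtain ⟨ξ, η, hrel, hne⟩ := hnot
  by_cases hc : ξ * ind μ (Axy nrm x y) = 0
  · have hne' : η * ind μ (Axy nrm x y) ≠ 0 := hne hc
    have hrel' : sm (η * ind μ (Axy nrm x y)) y + sm (ξ * ind μ (Axy nrm x y)) x = 0 := by
      rw [add_comm]; exact hrel
    have hAA' : aeSub μ (Axy nrm x y) (Axy nrm y x) := by
      show μ (Axy nrm x y \ (Aset nrm y ∩ Aset nrm x)) = 0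
      rw [Set.inter_comm]
      exact hAA
    exact ⟨_, good_symm (good_restrict hRN hAm hAA' hrel'), pos_of_ne η hAm hne'⟩
  · exact ⟨_, good_restrict hRN hAm hAA hrel, pos_of_ne ξ hAm hc⟩

end Aux
/-- **Proposition 2.1(1).** If `P(A_{xy}) > 0` and `x, y` are not `L⁰`-independent on
`A_{xy}`, then there is a unique (mod null sets) `F` with the properties above. -/
theorem exists_unique_dependence_part {Ω : Type*} [MeasurableSpace Ω] (μ : Measure Ω)
    [IsProbabilityMeasure μ] {S : Type*} [AddCommGroup S]
    (sm : L0 μ → S → S) (nrm : S → L0 μ) (hRN : IsRNModule μ sm nrm)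
    (x y : S) (hA : 0 < μ (Axy nrm x y)) (hnot : ¬ Indep sm x y (Axy nrm x y)) :
    ∃ F : Set Ω, SplitProp μ sm nrm x y F ∧
      ∀ F' : Set Ω, SplitProp μ sm nrm x y F' → aeEqS μ F F' := by
  classical
  have hAm : MeasurableSet (Axy nrm x y) :=
    (measurable_Aset x).inter (measurable_Aset y)
  obtain ⟨G0, hG0, hG0pos⟩ := exists_good_pos hRN hnot
  set T : Set ENNReal := μ '' {F | Good μ sm nrm x y F} with hT
  have hTne : T.Nonempty := ⟨μ G0, ⟨G0, hG0, rfl⟩⟩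
  obtain ⟨u, humono, hulim, humem⟩ := exists_seq_tendsto_sSup hTne (OrderTop.bddAbove T)
  choose Gs hGs hGsval using fun n => humem n
  set F : Set Ω := ⋃ n, Gs n with hFdef
  have hFgood : Good μ sm nrm x y F := good_iUnion hRN hGs
  have hFm : MeasurableSet F := hFgood.1
  have hFμ : μ F = sSup T := by
    refine le_antisymm (le_sSup ⟨F, hFgood, rfl⟩) ?_
    refine le_of_tendsto hulim (Eventually.of_forall fun n => ?_)
    rw [← hGsval n]
    exact measure_mono (subset_iUnion Gs n)
  have hmax : ∀ F', Good μ sm nrm x y F' → μ (F' \ F) = 0 := by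
    intro F' hF'
    have hun : Good μ sm nrm x y (F ∪ F') := by
      have heq : F ∪ F' = ⋃ n, (fun n => if n = 0 then F else F') n := by
        ext ω
        simp only [Set.mem_union, Set.mem_iUnion]
        constructor
        · rintro (h | h)
          exacts [⟨0, by simp [h]⟩, ⟨1, by simp [h]⟩]
        · rintro ⟨n, hn⟩
          by_cases h0 : n = 0
          · left; simpa [h0] using hn
          · right; simpa [h0] using hn
      rw [heq]
      exact good_iUnion hRN (fun n => by
        by_cases h0 : n = 0 <;> simp only [h0, if_true, if_false] <;>
          [exact hFgood; exact hF'])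
    have h1 : μ (F ∪ F') ≤ μ F := by
      rw [hFμ]
      exact le_sSup ⟨_, hun, rfl⟩
    have h2 : μ (F ∪ F') = μ F + μ (F' \ F) := by
      rw [← Set.union_diff_self, measure_union disjoint_sdiff_self_right (hF'.1.diff hFm)]
    rw [h2] at h1
    have hfin : μ F ≠ ⊤ := measure_ne_top μ F
    have h3 : μ F + μ (F' \ F) ≤ μ F + 0 := by simpa using h1
    exact le_antisymm ((ENNReal.add_le_add_iff_left hfin).mp h3) zero_le
  have hFpos : 0 < μ F := lt_of_lt_of_le hG0pos (hFμ ▸ le_sSup ⟨G0, hG0, rfl⟩)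
  obtain ⟨ξF, ηF, hξF, hηF, hrelF⟩ := hFgood.2.2
  -- independence on the complement
  have hindep : 0 < μ (Axy nrm x y \ F) → Indep sm x y (Axy nrm x y \ F) := by
    intro _ ξ η hrel
    set D : Set Ω := Axy nrm x y \ F with hDdef
    have hDm : MeasurableSet D := hAm.diff hFm
    have hDA : aeSub μ D (Axy nrm x y) := by
      have he : D \ Axy nrm x y = ∅ := by
        rw [Set.diff_eq_empty]
        exact Set.diff_subset
      rw [aeSub, he, measure_empty]
    have hkey : ∀ ζ : L0 μ, sm (ζ * ind μ D) x + sm ((fun _ => η) ζ * ind μ D) y = 0 →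
        Good μ sm nrm x y (D ∩ {ω | ζ ω ≠ 0}) := fun ζ hr => good_restrict hRN hDm hDA hr
    have hzero : ∀ G : Set Ω, Good μ sm nrm x y G → G ⊆ D → μ G = 0 := by
      intro G hG hsub
      have h0 := hmax G hG
      have : G \ F = G := by
        ext ω
        exact ⟨fun hω => hω.1, fun hω => ⟨hω, (hsub hω).2⟩⟩
      rwa [this] at h0
    constructor
    · by_contra hne
      have hGgood := good_restrict hRN hDm hDA hrel
      have hGpos := pos_of_ne ξ hDm hne
      exact absurd (hzero _ hGgood Set.inter_subset_left) (ne_of_gt hGpos)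
    · by_contra hne
      have hrel' : sm (η * ind μ D) y + sm (ξ * ind μ D) x = 0 := by
        rw [add_comm]; exact hrel
      have hDA' : aeSub μ D (Axy nrm y x) := by
        show μ (D \ (Aset nrm y ∩ Aset nrm x)) = 0
        rw [Set.inter_comm]
        exact hDA
      have hGgood := good_symm (good_restrict hRN hDm hDA' hrel')
      have hGpos := pos_of_ne η hDm hne
      exact absurd (hzero _ hGgood Set.inter_subset_left) (ne_of_gt hGpos)
  have hsplit : SplitProp μ sm nrm x y F :=
    ⟨hFm, hFgood.2.1, hFpos, ⟨ξF, ηF, aeSub_iff.mpr hξF, aeSub_iff.mpr hηF, hrelF⟩, hindep⟩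
  refine ⟨F, hsplit, ?_⟩
  intro F' hF'
  obtain ⟨hF'm, hF'A, hF'pos, ⟨ξ', η', hξ'0, hη'0, hrel'⟩, hindep'⟩ := hF'
  have hF'good : Good μ sm nrm x y F' :=
    ⟨hF'm, hF'A, ξ', η', aeSub_iff.mp hξ'0, aeSub_iff.mp hη'0, hrel'⟩
  have h1 : μ (F' \ F) = 0 := hmax F' hF'good
  have h2 : μ (F \ F') = 0 := by
    by_contra hne
    have hpos : 0 < μ (F \ F') := pos_iff_ne_zero.mpr hne
    set E : Set Ω := F \ F' with hEdef
    have hEm : MeasurableSet E := hFm.diff hF'm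
    have hEsub : aeSub μ E (Axy nrm x y \ F') := by
      rw [aeSub_iff]
      filter_upwards [aeSub_iff.mp hFgood.2.1] with ω h hω
      exact ⟨h hω.1, hω.2⟩
    have hApos : 0 < μ (Axy nrm x y \ F') := by
      have hsub : E ⊆ (E \ (Axy nrm x y \ F')) ∪ (Axy nrm x y \ F') := by
        intro ω hω
        by_cases hX : ω ∈ Axy nrm x y \ F'
        · exact Or.inr hX
        · exact Or.inl ⟨hω, hX⟩
      calc 0 < μ E := hpos
        _ ≤ μ ((E \ (Axy nrm x y \ F')) ∪ (Axy nrm x y \ F')) := measure_mono hsub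
        _ ≤ μ (E \ (Axy nrm x y \ F')) + μ (Axy nrm x y \ F') := measure_union_le _ _
        _ = μ (Axy nrm x y \ F') := by rw [hEsub, zero_add]
    have hind := hindep' hApos
    have hXm : MeasurableSet (Axy nrm x y \ F') := hAm.diff hF'm
    have hc : ∀ ζ : L0 μ, (ζ * ind μ E) * ind μ (Axy nrm x y \ F') = ζ * ind μ E := by
      intro ζ
      rw [mul_assoc, ind_mul_ind hEm hXm]
      congr 1
      apply ind_congr ?_ (hEm.inter hXm) hEm
      filter_upwards [aeSub_iff.mp hFgood.2.1] with ω h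
      constructor
      · rintro ⟨h1', _⟩
        exact h1'
      · intro hω
        exact ⟨hω, h hω.1, hω.2⟩
    have hrelE : sm ((ξF * ind μ E) * ind μ (Axy nrm x y \ F')) x +
        sm ((ηF * ind μ E) * ind μ (Axy nrm x y \ F')) y = 0 := by
      rw [hc, hc, ← sm_ind_restrict hFm hEm Set.diff_subset ξF,
        ← sm_ind_restrict hFm hEm Set.diff_subset ηF,
        hRN.mul_smul (ind μ E) (ξF * ind μ F) x, hRN.mul_smul (ind μ E) (ηF * ind μ F) y,
        ← hRN.smul_add, hrelF, sm_zero_right hRN]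
    obtain ⟨hz1, -⟩ := hind (ξF * ind μ E) (ηF * ind μ E) hrelE
    rw [hc] at hz1
    have hE0 : μ E = 0 := by
      rw [measure_eq_zero_iff_ae_notMem]
      have hco : ⇑(ξF * ind μ E) =ᵐ[μ] ⇑(0 : L0 μ) := by rw [hz1]
      filter_upwards [hco, AEEqFun.coeFn_mul ξF (ind μ E), ind_coeFn hEm, hξF,
        (AEEqFun.coeFn_zero : ⇑(0 : Ω →ₘ[μ] ℝ) =ᵐ[μ] 0)] with ω e1 e2 e3 e4 e5
      intro hω
      rw [e2, Pi.mul_apply, e3, Set.indicator_of_mem hω, mul_one, e5, Pi.zero_apply] at e1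
      exact e4 hω.1 e1
    exact hne hE0
  rw [aeEqS]
  exact measure_union_null h2 h1

end RNM
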